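/- If an output vertex v ∈ O∖I of a labelled open graph (G,I,O,λ) with gflow and |I| = |O| has a unique neighbour u ∈ V∖O, then λ(u) = XY. -/
import Mathlib


open Set

/-- The three measurement planes. -/
inductive MPlane | XY | XZ | YZ
deriving DecidableEq

/-- The odd neighbourhood of a set `K`: vertices with an odd number of neighbours in `K`. -/
def oddNbhd {V : Type*} (G : SimpleGraph V) (K : Set V) : Set V :=
  {u | Odd (K ∩ G.neighborSet u).ncard}

/-- `(g, prec)` is a gflow for the labelled open graph `(G, I, O, lam)`. -/
structure GFlow {V : Type*} (G : SimpleGraph V) (I O : Set V) (lam : V → MPlane)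
    (g : V → Set V) (prec : V → V → Prop) : Prop where
  irrefl : ∀ v, ¬ prec v v
  trans : ∀ u v w, prec u v → prec v w → prec u w
  noInput : ∀ v, v ∉ O → g v ∩ I = ∅
  g1 : ∀ v, v ∉ O → ∀ w ∈ g v, w ≠ v → prec v w
  g2 : ∀ v, v ∉ O → ∀ w ∈ oddNbhd G (g v), w ≠ v → prec v w
  gXY : ∀ v, v ∉ O → lam v = MPlane.XY → v ∉ g v ∧ v ∈ oddNbhd G (g v)
  gXZ : ∀ v, v ∉ O → lam v = MPlane.XZ → v ∈ g v ∧ v ∈ oddNbhd G (g v)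
  gYZ : ∀ v, v ∉ O → lam v = MPlane.YZ → v ∈ g v ∧ v ∉ oddNbhd G (g v)

/-! ### Auxiliary material for the proof -/

section Aux

variable {V : Type*} [Fintype V]

lemma zmod2_natCast_eq_ite (n : ℕ) : (n : ZMod 2) = if Odd n then 1 else 0 := by
  conv_lhs => rw [← ZMod.natCast_mod n 2]
  rcases Nat.mod_two_eq_zero_or_one n with h | h <;> simp [h, Nat.odd_iff]

open Classical in
/-- Summing the indicator of `K ∩ N(w)` over all vertices computes the parity of
`|K ∩ N(w)|` in `ZMod 2`. -/
lemma sum_indicator_adj (G : SimpleGraph V) (K : Set V) (w : V) :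
    (∑ z : V, if z ∈ K ∧ G.Adj w z then (1 : ZMod 2) else 0)
      = if Odd (K ∩ G.neighborSet w).ncard then 1 else 0 := by
  classical
  rw [Finset.sum_boole]
  have hcard : ({z ∈ Finset.univ | z ∈ K ∧ G.Adj w z} : Finset V).card
      = (K ∩ G.neighborSet w).ncard := by
    rw [Set.ncard_eq_toFinset_card']
    congr 1
    ext z
    simp [SimpleGraph.mem_neighborSet]
  rw [hcard, zmod2_natCast_eq_ite]

open Classical in
/-- The coordinate-wise "extended reduced adjacency" linear map used in the proof:
on an `XY`-measured coordinate `w` it returns the parity of the neighbourhood overlap,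
on any other coordinate it returns the value at `w` (extended by zero on `I`). -/
noncomputable def PsiFun (G : SimpleGraph V) (I O : Set V) (lam : V → MPlane)
    (x : {z : V // z ∉ I} → ZMod 2) (w : {w : V // w ∉ O}) : ZMod 2 :=
  if lam ↑w = MPlane.XY then ∑ z : {z : V // z ∉ I}, (if G.Adj ↑w ↑z then x z else 0)
  else if h : (↑w : V) ∈ I then 0 else x ⟨↑w, h⟩

open Classical in
noncomputable def PsiMap (G : SimpleGraph V) (I O : Set V) (lam : V → MPlane) :
    ({z : V // z ∉ I} → ZMod 2) →ₗ[ZMod 2] ({w : V // w ∉ O} → ZMod 2) where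
  toFun := PsiFun G I O lam
  map_add' x y := by
    funext w
    by_cases hxy : lam ↑w = MPlane.XY
    · simp only [PsiFun, hxy, if_true, Pi.add_apply, ← Finset.sum_add_distrib]
      exact Finset.sum_congr rfl fun z _ => by split <;> simp
    · simp only [PsiFun, hxy, if_false, Pi.add_apply]
      split <;> simp
  map_smul' c x := by
    funext w
    by_cases hxy : lam ↑w = MPlane.XY
    · simp only [PsiFun, hxy, if_true, Pi.smul_apply, smul_eq_mul, RingHom.id_apply,
        Finset.mul_sum]
      exact Finset.sum_congr rfl fun z _ => by split <;> simp
    · simp only [PsiFun, hxy, if_false, Pi.smul_apply, smul_eq_mul, RingHom.id_apply]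
      split <;> simp

open Classical in
lemma PsiMap_apply (G : SimpleGraph V) (I O : Set V) (lam : V → MPlane)
    (x : {z : V // z ∉ I} → ZMod 2) (w : {w : V // w ∉ O}) :
    PsiMap G I O lam x w
      = if lam ↑w = MPlane.XY then ∑ z : {z : V // z ∉ I}, (if G.Adj ↑w ↑z then x z else 0)
        else if h : (↑w : V) ∈ I then 0 else x ⟨↑w, h⟩ := rfl

end Aux

/-- If an output `v ∈ O ∖ I` of a labelled open graph with gflow and
`|I| = |O|` has a unique neighbour `u ∈ V ∖ O`, then `λ(u) = XY`. -/
theorem gflow_output_unique_neighbour_XY {V : Type*} [Fintype V]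
    (G : SimpleGraph V) (I O : Set V) (lam : V → MPlane)
    (h : ∃ g prec, GFlow G I O lam g prec)
    (hcard : I.ncard = O.ncard)
    (v u : V) (hvO : v ∈ O) (hvI : v ∉ I)
    (hN : G.neighborSet v = {u}) (huO : u ∉ O) :
    lam u = MPlane.XY := by
  classical
  obtain ⟨g, prec, hg⟩ := h
  by_contra hXY
  haveI : Fact (Nat.Prime 2) := ⟨Nat.prime_two⟩
  set Ψ := PsiMap G I O lam with hΨdef
  -- indicator vectors of the correction sets
  set x : {w : V // w ∉ O} → ({z : V // z ∉ I} → ZMod 2) :=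
    fun w z => if (↑z : V) ∈ g ↑w then 1 else 0 with hxdef
  set y : {w : V // w ∉ O} → ({w : V // w ∉ O} → ZMod 2) :=
    fun w => Ψ (x w) with hydef
  -- no correction set meets the inputs
  have hnoI : ∀ (w : {w : V // w ∉ O}) (z : V), z ∈ I → z ∉ g ↑w := by
    intro w z hzI hzg
    have := hg.noInput ↑w w.2
    exact absurd (Set.mem_inter hzg hzI) (by rw [this]; exact Set.notMem_empty z)
  -- evaluation of the family y
  have heval : ∀ w w' : {w : V // w ∉ O},
      y w w' = if lam ↑w' = MPlane.XY
        then (if (↑w' : V) ∈ oddNbhd G (g ↑w) then 1 else 0)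
        else (if (↑w' : V) ∈ g ↑w then 1 else 0) := by
    intro w w'
    rw [hydef]
    simp only
    rw [PsiMap_apply]
    by_cases hxy : lam ↑w' = MPlane.XY
    · rw [if_pos hxy, if_pos hxy]
      have h1 : ∀ z : {z : V // z ∉ I},
          (if G.Adj ↑w' ↑z then x w z else 0)
            = (if (↑z : V) ∈ g ↑w ∧ G.Adj ↑w' ↑z then (1 : ZMod 2) else 0) := by
        intro z
        by_cases ha : G.Adj ↑w' ↑z <;> by_cases hk : (↑z : V) ∈ g ↑w <;>
          simp [hxdef, ha, hk]
      rw [Finset.sum_congr rfl fun z _ => h1 z]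
      have h2 : (∑ z : {z : V // z ∉ I},
            if (↑z : V) ∈ g ↑w ∧ G.Adj ↑w' ↑z then (1 : ZMod 2) else 0)
          = ∑ z : V, (if z ∈ g ↑w ∧ G.Adj ↑w' z then (1 : ZMod 2) else 0) := by
        rw [← Finset.sum_subtype (Finset.univ.filter fun z : V => z ∉ I) (by simp)
          (fun z : V => if z ∈ g ↑w ∧ G.Adj ↑w' z then (1 : ZMod 2) else 0)]
        refine Finset.sum_subset (Finset.filter_subset _ _) ?_
        intro z _ hz
        have hzI : z ∈ I := by
          by_contra hzI
          exact hz (Finset.mem_filter.mpr ⟨Finset.mem_univ z, hzI⟩)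
        exact if_neg fun hc => hnoI w z hzI hc.1
      rw [h2, sum_indicator_adj]
      by_cases ho : Odd ((g ↑w ∩ G.neighborSet ↑w').ncard) <;>
        simp [oddNbhd, ho]
    · rw [if_neg hxy, if_neg hxy]
      split
      · next hI =>
        rw [if_neg fun hc => hnoI w ↑w' hI hc]
      · next hI => simp [hxdef]
  -- triangularity of the family
  have htri : ∀ w w' : {w : V // w ∉ O}, w' ≠ w → ¬ prec ↑w ↑w' → y w w' = 0 := by
    intro w w' hne hnp
    have hne' : (↑w' : V) ≠ ↑w := fun hh => hne (Subtype.ext hh)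
    rw [heval]
    by_cases hxy : lam ↑w' = MPlane.XY
    · rw [if_pos hxy, if_neg]
      intro hmem
      exact hnp (hg.g2 ↑w w.2 ↑w' hmem hne')
    · rw [if_neg hxy, if_neg]
      intro hmem
      exact hnp (hg.g1 ↑w w.2 ↑w' hmem hne')
  -- unit diagonal
  have hdiag : ∀ w : {w : V // w ∉ O}, y w w = 1 := by
    intro w
    rw [heval]
    rcases hl : lam ↑w with _ | _ | _
    · obtain ⟨_, h2⟩ := hg.gXY ↑w w.2 hl
      simp [h2]
    · obtain ⟨h1, _⟩ := hg.gXZ ↑w w.2 hl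
      simp [h1]
    · obtain ⟨h1, _⟩ := hg.gYZ ↑w w.2 hl
      simp [h1]
  -- linear independence of the family, via prec-minimal elements
  have hli : LinearIndependent (ZMod 2) y := by
    rw [Fintype.linearIndependent_iff]
    intro c hc
    by_contra hcc
    push_neg at hcc
    obtain ⟨i, hi⟩ := hcc
    have hwf : WellFounded (fun a b : {w : V // w ∉ O} => prec ↑a ↑b) := by
      haveI : IsTrans {w : V // w ∉ O} (fun a b => prec ↑a ↑b) :=
        ⟨fun a b c hab hbc => hg.trans ↑a ↑b ↑c hab hbc⟩
      haveI : IsIrrefl {w : V // w ∉ O} (fun a b => prec ↑a ↑b) :=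
        ⟨fun a => hg.irrefl ↑a⟩
      exact Finite.wellFounded_of_trans_of_irrefl _
    obtain ⟨m, hmS, hmin⟩ := hwf.has_min {w : {w : V // w ∉ O} | c w ≠ 0} ⟨i, hi⟩
    have hcm := congrFun hc m
    rw [Finset.sum_apply] at hcm
    simp only [Pi.smul_apply, smul_eq_mul, Pi.zero_apply] at hcm
    rw [Finset.sum_eq_single m] at hcm
    · rw [hdiag m, mul_one] at hcm
      exact hmS hcm
    · intro b _ hb
      by_cases hcb : c b = 0
      · simp [hcb]
      · rw [htri b m (Ne.symm hb) (hmin b hcb), mul_zero]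
    · intro hm
      exact absurd (Finset.mem_univ m) hm
  -- the two index types have the same cardinality
  have hsub : ∀ S : Set V, Fintype.card {z : V // z ∈ S} = S.ncard := by
    intro S
    rw [← Nat.card_coe_set_eq, Nat.card_eq_fintype_card]
  have hcard2 : Fintype.card {z : V // z ∉ I} = Fintype.card {w : V // w ∉ O} := by
    have h1 : Fintype.card {z : V // z ∉ I}
        = Fintype.card V - Fintype.card {z : V // z ∈ I} :=
      Fintype.card_subtype_compl _
    have h2 : Fintype.card {w : V // w ∉ O}
        = Fintype.card V - Fintype.card {w : V // w ∈ O} :=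
      Fintype.card_subtype_compl _
    rw [h1, h2, hsub I, hsub O, hcard]
  -- surjectivity of Ψ
  have hspan : Submodule.span (ZMod 2) (Set.range y) = ⊤ :=
    hli.span_eq_top_of_card_eq_finrank' (by rw [Module.finrank_pi])
  have hrange : LinearMap.range Ψ = ⊤ := by
    rw [← top_le_iff, ← hspan, Submodule.span_le]
    rintro _ ⟨w, rfl⟩
    exact LinearMap.mem_range.mpr ⟨x w, rfl⟩
  -- injectivity of Ψ
  have hfr : Module.finrank (ZMod 2) ({z : V // z ∉ I} → ZMod 2)
      = Module.finrank (ZMod 2) ({w : V // w ∉ O} → ZMod 2) := by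
    rw [Module.finrank_pi, Module.finrank_pi, hcard2]
  have hinj : Function.Injective Ψ :=
    (LinearMap.injective_iff_surjective_of_finrank_eq_finrank hfr).mpr
      (LinearMap.range_eq_top.mp hrange)
  -- the kernel vector: indicator of v
  set x0 : {z : V // z ∉ I} → ZMod 2 := fun z => if (↑z : V) = v then 1 else 0 with hx0def
  have hx0ne : x0 ≠ 0 := by
    intro hh
    have := congrFun hh ⟨v, hvI⟩
    simp [hx0def] at this
  have hΨ0 : Ψ x0 = 0 := by
    funext w
    rw [hΨdef]
    rw [PsiMap_apply, Pi.zero_apply]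
    by_cases hxy : lam ↑w = MPlane.XY
    · rw [if_pos hxy]
      have hterm : ∀ z : {z : V // z ∉ I}, (if G.Adj ↑w ↑z then x0 z else 0) = 0 := by
        intro z
        by_cases ha : G.Adj ↑w ↑z
        · rw [if_pos ha, hx0def]
          by_cases hzv : (↑z : V) = v
          · exfalso
            have hw : (↑w : V) ∈ G.neighborSet v := by
              rw [SimpleGraph.mem_neighborSet]
              exact G.adj_symm (hzv ▸ ha)
            rw [hN] at hw
            exact hXY (by rwa [Set.mem_singleton_iff.mp hw] at hxy)
          · exact if_neg hzv
        · exact if_neg ha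
      rw [Finset.sum_congr rfl fun z _ => hterm z, Finset.sum_const_zero]
    · rw [if_neg hxy]
      split
      · rfl
      · next hI =>
        have hwv : (↑w : V) ≠ v := fun hh => w.2 (hh ▸ hvO)
        simp [hx0def, hwv]
  exact hx0ne (hinj (hΨ0.trans (map_zero Ψ).symm))
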